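/- arXiv:2308.09152 — 2 statements merged into one kernel-verified Lean document; each statement's English description precedes it below -/
import Mathlib

section
/- Let γ_e, γ_p, d_E, d_P > 0 with γ_e/d_E > γ_p/d_P. The function S(t) = (θ_E − θ_P) + arcsin(γ_e t/d_E) − arcsin(γ_p t/d_P) is convex on [0, min(d_E/γ_e, d_P/γ_p)), and consequently S(t) ≥ (θ_E − θ_P) + (γ_e/d_E − γ_p/d_P) t for all t in that interval. -/
open Real Set

private lemma arcsinLin_hasDerivAt (c : ℝ) {x : ℝ} (h : (c * x) ^ 2 < 1) :
    HasDerivAt (fun t => Real.arcsin (c * t)) (c / Real.sqrt (1 - (c * x) ^ 2)) x := by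
  have h1 : c * x ≠ -1 := by intro h'; rw [h'] at h; norm_num at h
  have h2 : c * x ≠ 1 := by intro h'; rw [h'] at h; norm_num at h
  have hlin : HasDerivAt (fun t : ℝ => c * t) (c * 1) x := (hasDerivAt_id x).const_mul c
  have := (Real.hasDerivAt_arcsin h1 h2).comp x hlin
  refine this.congr_deriv ?_
  ring

private lemma invSqrt_hasDerivAt (c : ℝ) {x : ℝ} (h : (c * x) ^ 2 < 1) :
    HasDerivAt (fun t => c / Real.sqrt (1 - (c * t) ^ 2))
      (c ^ 3 * x / ((1 - (c * x) ^ 2) * Real.sqrt (1 - (c * x) ^ 2))) x := by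
  have hD : 0 < 1 - (c * x) ^ 2 := by linarith
  have hlin : HasDerivAt (fun t : ℝ => c * t) (c * 1) x := (hasDerivAt_id x).const_mul c
  have hu : HasDerivAt (fun t => 1 - (c * t) ^ 2) (-(2 * c ^ 2 * x)) x := by
    have := (hasDerivAt_const x (1 : ℝ)).sub (hlin.pow 2)
    refine this.congr_deriv ?_
    ring
  have hsq : HasDerivAt (fun t => Real.sqrt (1 - (c * t) ^ 2))
      (1 / (2 * Real.sqrt (1 - (c * x) ^ 2)) * (-(2 * c ^ 2 * x))) x :=
    (Real.hasDerivAt_sqrt (ne_of_gt hD)).comp x hu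
  have hs0 : Real.sqrt (1 - (c * x) ^ 2) ≠ 0 := ne_of_gt (Real.sqrt_pos.mpr hD)
  have hinv := (hsq.inv hs0).const_mul c
  have hsq2 : Real.sqrt (1 - (c * x) ^ 2) ^ 2 = 1 - (c * x) ^ 2 := Real.sq_sqrt hD.le
  simp only [div_eq_mul_inv]
  refine hinv.congr_deriv ?_
  field_simp
  have e : √(1 - c ^ 2 * x ^ 2) ^ 3 = (1 - c ^ 2 * x ^ 2) * √(1 - c ^ 2 * x ^ 2) := by
    linear_combination √(1 - c ^ 2 * x ^ 2) * Real.sq_sqrt (show (0:ℝ) ≤ 1 - c ^ 2 * x ^ 2 by nlinarith)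
  rw [e]

private lemma arcsin_sub_id_mono : MonotoneOn (fun x => Real.arcsin x - x) (Set.Icc 0 1) := by
  apply monotoneOn_of_deriv_nonneg (convex_Icc 0 1)
  · exact (Real.continuous_arcsin.sub continuous_id).continuousOn
  · intro x hx
    rw [interior_Icc] at hx
    have h1 : x ≠ -1 := ne_of_gt (by linarith [hx.1])
    have h2 : x ≠ 1 := ne_of_lt hx.2
    exact ((Real.hasDerivAt_arcsin h1 h2).sub (hasDerivAt_id x)).differentiableAt.differentiableWithinAt
  · intro x hx
    rw [interior_Icc] at hx
    have h1 : x ≠ -1 := ne_of_gt (by linarith [hx.1])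
    have h2 : x ≠ 1 := ne_of_lt hx.2
    have hd := ((Real.hasDerivAt_arcsin h1 h2).sub (hasDerivAt_id' (x:=x))).deriv
    rw [show (fun x => arcsin x - x) = (arcsin - fun x => x) from rfl, hd]
    have hD : 0 < 1 - x ^ 2 := by nlinarith [hx.1, hx.2]
    have hs0 : 0 < Real.sqrt (1 - x ^ 2) := Real.sqrt_pos.mpr hD
    have hs1 : Real.sqrt (1 - x ^ 2) ≤ 1 := Real.sqrt_le_one.mpr (by nlinarith [hx.1])
    have : (1 : ℝ) ≤ 1 / Real.sqrt (1 - x ^ 2) := by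
      rw [le_div_iff₀ hs0]; linarith
    linarith

/-- If `γ_e/d_E > γ_p/d_P`, then
`S(t) = (θ_E − θ_P) + arcsin(γ_e t/d_E) − arcsin(γ_p t/d_P)` is convex on
`[0, min(d_E/γ_e, d_P/γ_p))` and satisfies the tangent-line lower bound
`S(t) ≥ (θ_E − θ_P) + (γ_e/d_E − γ_p/d_P) t` there. -/
theorem stmt_7 (γe γp dE dP θE θP : ℝ)
    (hγe : 0 < γe) (hγp : 0 < γp) (hdE : 0 < dE) (hdP : 0 < dP)
    (hratio : γp / dP < γe / dE)
    (S : ℝ → ℝ)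
    (hS : ∀ t, S t = (θE - θP) + Real.arcsin (γe * t / dE) - Real.arcsin (γp * t / dP)) :
    ConvexOn ℝ (Set.Ico 0 (min (dE / γe) (dP / γp))) S ∧
      ∀ t ∈ Set.Ico 0 (min (dE / γe) (dP / γp)),
        (θE - θP) + (γe / dE - γp / dP) * t ≤ S t := by
  set a := γe / dE with ha_def
  set b := γp / dP with hb_def
  have ha : 0 < a := div_pos hγe hdE
  have hb : 0 < b := div_pos hγp hdP
  set m := min (dE / γe) (dP / γp) with hm_def
  have hSfun : S = fun t => (θE - θP) + Real.arcsin (a * t) - Real.arcsin (b * t) := by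
    funext t
    rw [hS t, show γe * t / dE = a * t by rw [ha_def]; ring,
      show γp * t / dP = b * t by rw [hb_def]; ring]
  -- bounds on a*t, b*t for t in the interval
  have hbound : ∀ t, 0 ≤ t → t < m → 0 ≤ a * t ∧ a * t < 1 ∧ 0 ≤ b * t ∧ b * t < 1 ∧ b * t ≤ a * t := by
    intro t ht htm
    have h1 : t < dE / γe := lt_of_lt_of_le htm (min_le_left _ _)
    have h2 : t < dP / γp := lt_of_lt_of_le htm (min_le_right _ _)
    have hat : a * t < 1 := by
      have := mul_lt_mul_of_pos_left h1 ha
      have he : a * (dE / γe) = 1 := by rw [ha_def]; field_simp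
      linarith
    have hbt : b * t < 1 := by
      have := mul_lt_mul_of_pos_left h2 hb
      have he : b * (dP / γp) = 1 := by rw [hb_def]; field_simp
      linarith
    exact ⟨mul_nonneg ha.le ht, hat, mul_nonneg hb.le ht, hbt,
      mul_le_mul_of_nonneg_right hratio.le ht⟩
  rw [hSfun]
  set F : ℝ → ℝ := fun t => (θE - θP) + Real.arcsin (a * t) - Real.arcsin (b * t) with hF
  constructor
  · -- convexity
    have hint : interior (Set.Ico (0:ℝ) m) = Set.Ioo 0 m := interior_Ico
    set G : ℝ → ℝ := fun t => a / Real.sqrt (1 - (a * t) ^ 2) - b / Real.sqrt (1 - (b * t) ^ 2)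
      with hG
    have hFderiv : ∀ x ∈ Set.Ioo (0:ℝ) m, HasDerivAt F (G x) x := by
      intro x hx
      obtain ⟨_, hax, _, hbx, _⟩ := hbound x hx.1.le hx.2
      have hax2 : (a * x) ^ 2 < 1 := by nlinarith
      have hbx2 : (b * x) ^ 2 < 1 := by nlinarith
      exact ((arcsinLin_hasDerivAt a hax2).const_add (θE - θP)).sub (arcsinLin_hasDerivAt b hbx2)
    have hderiv_eq : ∀ x ∈ Set.Ioo (0:ℝ) m, deriv F x = G x := fun x hx =>
      (hFderiv x hx).deriv
    have hGderiv : ∀ x ∈ Set.Ioo (0:ℝ) m, HasDerivAt G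
        (a ^ 3 * x / ((1 - (a * x) ^ 2) * Real.sqrt (1 - (a * x) ^ 2))
          - b ^ 3 * x / ((1 - (b * x) ^ 2) * Real.sqrt (1 - (b * x) ^ 2))) x := by
      intro x hx
      obtain ⟨_, hax, _, hbx, _⟩ := hbound x hx.1.le hx.2
      have hax2 : (a * x) ^ 2 < 1 := by nlinarith
      have hbx2 : (b * x) ^ 2 < 1 := by nlinarith
      exact (invSqrt_hasDerivAt a hax2).sub (invSqrt_hasDerivAt b hbx2)
    have heq : ∀ x ∈ Set.Ioo (0:ℝ) m, deriv F =ᶠ[nhds x] G := by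
      intro x hx
      exact Filter.eventuallyEq_of_mem (isOpen_Ioo.mem_nhds hx) hderiv_eq
    apply convexOn_of_deriv2_nonneg (convex_Ico 0 m)
    · apply Continuous.continuousOn
      rw [hF]
      exact ((continuous_const.add (Real.continuous_arcsin.comp (continuous_const.mul continuous_id))).sub
        (Real.continuous_arcsin.comp (continuous_const.mul continuous_id)))
    · rw [hint]
      exact fun x hx => (hFderiv x hx).differentiableAt.differentiableWithinAt
    · rw [hint]
      intro x hx
      exact ((hGderiv x hx).differentiableAt.congr_of_eventuallyEq (heq x hx)).differentiableWithinAt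
    · rw [hint]
      intro x hx
      have h2 : deriv (deriv F) x = deriv G x := (heq x hx).deriv_eq
      have h3 : deriv G x = a ^ 3 * x / ((1 - (a * x) ^ 2) * Real.sqrt (1 - (a * x) ^ 2))
          - b ^ 3 * x / ((1 - (b * x) ^ 2) * Real.sqrt (1 - (b * x) ^ 2)) := (hGderiv x hx).deriv
      obtain ⟨hax0, hax, hbx0, hbx, hba⟩ := hbound x hx.1.le hx.2
      have hDa : 0 < 1 - (a * x) ^ 2 := by nlinarith
      have hDb : 0 < 1 - (b * x) ^ 2 := by nlinarith
      have hDab : 1 - (a * x) ^ 2 ≤ 1 - (b * x) ^ 2 := by nlinarith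
      have hsab : Real.sqrt (1 - (a * x) ^ 2) ≤ Real.sqrt (1 - (b * x) ^ 2) :=
        Real.sqrt_le_sqrt hDab
      have hsa : 0 < Real.sqrt (1 - (a * x) ^ 2) := Real.sqrt_pos.mpr hDa
      have hnum : b ^ 3 * x ≤ a ^ 3 * x := by nlinarith [hx.1]
      have hkey : b ^ 3 * x / ((1 - (b * x) ^ 2) * Real.sqrt (1 - (b * x) ^ 2))
          ≤ a ^ 3 * x / ((1 - (a * x) ^ 2) * Real.sqrt (1 - (a * x) ^ 2)) := by
        apply div_le_div₀ (mul_nonneg (pow_nonneg ha.le 3) hx.1.le) hnum (by positivity)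
        exact mul_le_mul hDab hsab hsa.le hDb.le
      have : (0:ℝ) ≤ deriv (deriv F) x := by rw [h2, h3]; linarith
      rw [show deriv^[2] F x = deriv (deriv F) x from by simp [Function.iterate_succ_apply']]
      exact this
  · -- tangent line bound
    intro t ht
    obtain ⟨hat0, hat, hbt0, hbt, hba⟩ := hbound t ht.1 ht.2
    have hmono := arcsin_sub_id_mono (Set.mem_Icc.mpr ⟨hbt0, hbt.le⟩)
      (Set.mem_Icc.mpr ⟨hat0, hat.le⟩) hba
    simp only [hF]
    have : (γe / dE - γp / dP) * t = a * t - b * t := by rw [ha_def, hb_def]; ring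
    rw [this]
    dsimp at hmono
    linarith
end

section
/- Let γ_e, γ_p, d_E, d_P > 0 with γ_e/d_E > γ_p/d_P, and θ_E − θ_P < π. Set t̂ = (π − (θ_E − θ_P)) / (γ_e/d_E − γ_p/d_P). If t̂ ≤ min(d_E/γ_e, d_P/γ_p), then there exists t ∈ [0, t̂] with S(t) = π, where S(t) = (θ_E − θ_P) + arcsin(γ_e t/d_E) − arcsin(γ_p t/d_P); moreover the smallest such t is at most t̂. -/
/-- If `γ_e/d_E > γ_p/d_P` and `θ_E − θ_P < π`, setting
`t̂ = (π − (θ_E − θ_P)) / (γ_e/d_E − γ_p/d_P)`, if `t̂ ≤ min(d_E/γ_e, d_P/γ_p)` then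
`S(t) = π` has a solution in `[0, t̂]`, and the smallest nonnegative solution is
at most `t̂`. -/
theorem stmt_8 (γe γp dE dP θE θP : ℝ)
    (hγe : 0 < γe) (hγp : 0 < γp) (hdE : 0 < dE) (hdP : 0 < dP)
    (hratio : γp / dP < γe / dE) (hθ : θE - θP < Real.pi)
    (S : ℝ → ℝ)
    (hS : ∀ t, S t = (θE - θP) + Real.arcsin (γe * t / dE) - Real.arcsin (γp * t / dP))
    (that : ℝ)
    (hthat : that = (Real.pi - (θE - θP)) / (γe / dE - γp / dP))
    (hle : that ≤ min (dE / γe) (dP / γp)) :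
    (∃ t ∈ Set.Icc 0 that, S t = Real.pi) ∧
      sInf {t : ℝ | 0 ≤ t ∧ S t = Real.pi} ≤ that := by
  have hD : 0 < γe / dE - γp / dP := sub_pos.mpr hratio
  have hnum : 0 < Real.pi - (θE - θP) := sub_pos.mpr hθ
  have hthat0 : 0 ≤ that := by
    rw [hthat]; positivity
  set a : ℝ := γe * that / dE with ha
  set b : ℝ := γp * that / dP with hb
  have ha0 : 0 ≤ a := by positivity
  have hb0 : 0 ≤ b := by positivity
  have ha1 : a ≤ 1 := by
    have h1 : that ≤ dE / γe := hle.trans (min_le_left _ _)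
    rw [ha, div_le_one hdE, mul_comm]
    calc that * γe ≤ (dE / γe) * γe := by nlinarith
      _ = dE := div_mul_cancel₀ _ hγe.ne'
  have hb1 : b ≤ 1 := by
    have h1 : that ≤ dP / γp := hle.trans (min_le_right _ _)
    rw [hb, div_le_one hdP, mul_comm]
    calc that * γp ≤ (dP / γp) * γp := by nlinarith
      _ = dP := div_mul_cancel₀ _ hγp.ne'
  have hab : a - b = Real.pi - (θE - θP) := by
    have : a - b = that * (γe / dE - γp / dP) := by
      rw [ha, hb]; ring
    rw [this, hthat, div_mul_cancel₀ _ hD.ne']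
  have hba : b ≤ a := by linarith
  -- arcsin a - arcsin b ≥ a - b
  have hkey : a - b ≤ Real.arcsin a - Real.arcsin b := by
    set u := Real.arcsin a
    set v := Real.arcsin b
    have huv : v ≤ u := Real.monotone_arcsin hba
    have hsa : Real.sin u = a := Real.sin_arcsin (by linarith) ha1
    have hsb : Real.sin v = b := Real.sin_arcsin (by linarith) hb1
    have hsub : Real.sin u - Real.sin v ≤ u - v := by
      have h1 : |Real.sin ((u - v) / 2)| ≤ |(u - v) / 2| := Real.abs_sin_le_abs
      have h2 : |Real.cos ((u + v) / 2)| ≤ 1 := Real.abs_cos_le_one _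
      calc Real.sin u - Real.sin v
          = 2 * Real.sin ((u - v) / 2) * Real.cos ((u + v) / 2) := Real.sin_sub_sin u v
        _ ≤ |2 * Real.sin ((u - v) / 2) * Real.cos ((u + v) / 2)| := le_abs_self _
        _ = 2 * |Real.sin ((u - v) / 2)| * |Real.cos ((u + v) / 2)| := by
            rw [abs_mul, abs_mul, abs_two]
        _ ≤ 2 * |(u - v) / 2| * 1 := by
            apply mul_le_mul _ h2 (abs_nonneg _) (by positivity)
            exact mul_le_mul_of_nonneg_left h1 (by norm_num)
        _ = u - v := by rw [abs_of_nonneg (by linarith)]; ring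
    linarith [hsa, hsb, hsub]
  have hS0 : S 0 = θE - θP := by
    simp [hS 0]
  have hSthat : Real.pi ≤ S that := by
    rw [hS that]
    have := hkey
    rw [hab] at this
    linarith
  have hcont : ContinuousOn S (Set.Icc 0 that) := by
    have : Continuous S := by
      have : S = fun t => (θE - θP) + Real.arcsin (γe * t / dE) - Real.arcsin (γp * t / dP) := by
        funext t; exact hS t
      rw [this]
      exact (continuous_const.add (Real.continuous_arcsin.comp (by fun_prop))).sub
        (Real.continuous_arcsin.comp (by fun_prop))
    exact this.continuousOn
  have hiv := intermediate_value_Icc hthat0 hcont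
  have hπmem : Real.pi ∈ Set.Icc (S 0) (S that) := by
    constructor
    · rw [hS0]; linarith
    · exact hSthat
  obtain ⟨t, htmem, htval⟩ := hiv hπmem
  refine ⟨⟨t, htmem, htval⟩, ?_⟩
  have hmem : t ∈ {t : ℝ | 0 ≤ t ∧ S t = Real.pi} := ⟨htmem.1, htval⟩
  have hbdd : BddBelow {t : ℝ | 0 ≤ t ∧ S t = Real.pi} := ⟨0, fun x hx => hx.1⟩
  exact (csInf_le hbdd hmem).trans htmem.2
end
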